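/- (Proposition 2: elliptical center-outward ordering.) Let 𝒳 = ℝ^d, let Σ be a symmetric positive definite d×d matrix, and equip ℝ^d with the Mahalanobis dissimilarity δ_Σ(x,y) = {(x−y)ᵀΣ^{−1}(x−y)}^{1/2}. Suppose X ∼ F satisfies Σ^{−1/2}(X − μ) ≐ O Σ^{−1/2}(X − μ) in distribution for every orthogonal d×d matrix O. Then the preference centrality r_F (computed with δ = δ_Σ) satisfies: δ_Σ(x, μ) = δ_Σ(y, μ) implies r_F(x) = r_F(y). If in addition r_F((1−α)μ + αx) ≥ r_F(x) for all x and α ∈ [0,1], then δ_Σ(x, μ) ≤ δ_Σ(y, μ) implies r_F(x) ≥ r_F(y); hence any θ* satisfying H(θ*(y)) = r_F(y) for all y with H strictly increasing can be written as θ*(x) = φ(δ_Σ(x, μ)) for a non-increasing φ: [0,∞) → ℝ. -/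

import Mathlib

open MeasureTheory

/-- The logistic function `σ(t) = 1/(1+e^{-t})`. -/
noncomputable def logistic (t : ℝ) : ℝ := 1 / (1 + Real.exp (-t))

/-- The pointwise cross-entropy loss `ℓ_p(t) = -p log σ(t) - (1-p) log σ(-t)`. -/
noncomputable def ceLoss (p t : ℝ) : ℝ :=
  -p * Real.log (logistic t) - (1 - p) * Real.log (logistic (-t))

/-- The preference probability `p_F(x,y) = P_{Z∼F}{δ(Z,x) > δ(Z,y)}`. -/
noncomputable def prefProb {X : Type*} [MeasurableSpace X] (F : Measure X)
    (δ : X → X → ℝ) (x y : X) : ℝ :=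
  (F {z | δ z y < δ z x}).toReal

/-- The population cross-entropy risk
`L_F(θ) = E_{X,Y i.i.d. ∼ F} [ℓ_{p_F(X,Y)}(θ(Y) - θ(X))]`. -/
noncomputable def popRisk {X : Type*} [MeasurableSpace X] (F : Measure X)
    (δ : X → X → ℝ) (θ : X → ℝ) : ℝ :=
  ∫ q, ceLoss (prefProb F δ q.1 q.2) (θ q.2 - θ q.1) ∂(F.prod F)


/-- The preference centrality `r_F(y) = E_{X∼F}[p_F(X,y)]`. -/
noncomputable def prefCentrality {X : Type*} [MeasurableSpace X] (F : Measure X)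
    (δ : X → X → ℝ) (y : X) : ℝ :=
  ∫ x, prefProb F δ x y ∂F

open Matrix in
/-- The Mahalanobis dissimilarity `δ_Σ(x,y) = {(x-y)ᵀ Σ⁻¹ (x-y)}^{1/2}`. -/
noncomputable def mahalanobis {d : ℕ} (Sig : Matrix (Fin d) (Fin d) ℝ)
    (x y : Fin d → ℝ) : ℝ :=
  Real.sqrt ((x - y) ⬝ᵥ (Sig⁻¹ *ᵥ (x - y)))

open Matrix ComplexOrder in
/-- The positive semidefinite square root of a positive semidefinite matrix, as defined in
Mathlib (Dec 2024) under the name `Matrix.PosSemidef.sqrt` (removed since). -/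
noncomputable def posSemidefSqrt {n 𝕜 : Type*} [Fintype n] [DecidableEq n] [RCLike 𝕜]
    {A : Matrix n n 𝕜} (hA : A.PosSemidef) : Matrix n n 𝕜 :=
  hA.1.eigenvectorUnitary.1 * diagonal ((↑) ∘ (√·) ∘ hA.1.eigenvalues) *
  (star hA.1.eigenvectorUnitary : Matrix n n 𝕜)

namespace EllipticalAux

open Matrix

variable {d : ℕ}

lemma psqrt_mul_self {d : ℕ} {A : Matrix (Fin d) (Fin d) ℝ} (hA : A.PosSemidef) :
    posSemidefSqrt hA * posSemidefSqrt hA = A := by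
  have hUU : (star hA.1.eigenvectorUnitary : Matrix (Fin d) (Fin d) ℝ) * hA.1.eigenvectorUnitary.1 = 1 :=
    Unitary.coe_star_mul_self _
  unfold posSemidefSqrt
  conv_rhs => rw [hA.1.spectral_theorem, Unitary.conjStarAlgAut_apply]
  simp only [mul_assoc]
  rw [← mul_assoc (star hA.1.eigenvectorUnitary : Matrix (Fin d) (Fin d) ℝ) _ _, hUU, one_mul,
    ← mul_assoc (diagonal _), diagonal_mul_diagonal]
  congr 3
  funext i
  simp [Real.mul_self_sqrt (hA.eigenvalues_nonneg i)]
lemma psqrt_transpose {d : ℕ} {A : Matrix (Fin d) (Fin d) ℝ} (hA : A.PosSemidef) :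
    (posSemidefSqrt hA)ᵀ = posSemidefSqrt hA := by
  rw [← conjTranspose_eq_transpose_of_trivial]
  unfold posSemidefSqrt
  rw [conjTranspose_mul, conjTranspose_mul, diagonal_conjTranspose, mul_assoc]
  congr 2


noncomputable def en (u : Fin d → ℝ) : ℝ := Real.sqrt (u ⬝ᵥ u)

lemma dot_self_nonneg (u : Fin d → ℝ) : 0 ≤ u ⬝ᵥ u :=
  Finset.sum_nonneg fun _ _ => mul_self_nonneg _

lemma continuous_dot : Continuous fun u : Fin d → ℝ => u ⬝ᵥ u := by
  simp only [dotProduct]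
  exact continuous_finset_sum _ fun i _ => (continuous_apply i).mul (continuous_apply i)

lemma continuous_en : Continuous (en (d := d)) := Real.continuous_sqrt.comp continuous_dot

lemma continuous_mulVec (M : Matrix (Fin d) (Fin d) ℝ) :
    Continuous fun v : Fin d → ℝ => M *ᵥ v := by
  refine continuous_pi fun i => ?_
  simp only [mulVec, dotProduct]
  exact continuous_finset_sum _ fun j _ => continuous_const.mul (continuous_apply j)

lemma vecMulVec_mulVec' (u w x : Fin d → ℝ) : vecMulVec u w *ᵥ x = (w ⬝ᵥ x) • u := by
  ext i
  simp only [mulVec, vecMulVec_apply, dotProduct, Pi.smul_apply, smul_eq_mul, Finset.sum_mul]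
  exact Finset.sum_congr rfl fun j _ => by ring

lemma householder (v w : Fin d → ℝ) (h : v ⬝ᵥ v = w ⬝ᵥ w) :
    ∃ O : Matrix (Fin d) (Fin d) ℝ, O * Oᵀ = 1 ∧ O *ᵥ v = w := by
  by_cases hvw : v = w
  · exact ⟨1, by rw [transpose_one, one_mul], by rw [one_mulVec, hvw]⟩
  · set u : Fin d → ℝ := v - w with hu
    have hune : u ≠ 0 := sub_ne_zero.mpr hvw
    set c : ℝ := u ⬝ᵥ u with hc
    have hc0 : c ≠ 0 := fun h0 => hune (dotProduct_self_eq_zero.mp h0)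
    set O : Matrix (Fin d) (Fin d) ℝ := 1 - (2 / c) • vecMulVec u u with hO
    have hOx : ∀ x, O *ᵥ x = x - ((2 / c) * (u ⬝ᵥ x)) • u := by
      intro x
      rw [hO, sub_mulVec, one_mulVec, smul_mulVec, vecMulVec_mulVec', smul_smul]
    have hOsymm : Oᵀ = O := by
      rw [hO, transpose_sub, transpose_one, transpose_smul]
      congr 1
      ext i j
      simp [vecMulVec_apply, transpose_apply, mul_comm]
    have hOO : ∀ x, O *ᵥ (O *ᵥ x) = x := by
      intro x
      rw [hOx, hOx]
      rw [dotProduct_sub, dotProduct_smul, smul_eq_mul, ← hc]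
      rw [sub_sub, ← add_smul]
      have : 2 / c * (u ⬝ᵥ x) + 2 / c * (u ⬝ᵥ x - 2 / c * (u ⬝ᵥ x) * c) = 0 := by
        field_simp
        ring
      rw [this, zero_smul, sub_zero]
    refine ⟨O, ?_, ?_⟩
    · rw [hOsymm]
      ext i j
      have h1 := congrFun (hOO (Pi.single j 1)) i
      rw [mulVec_mulVec] at h1
      simpa [Pi.single_apply, one_apply, eq_comm] using h1
    · rw [hOx]
      have huv : u ⬝ᵥ v = c / 2 := by
        rw [hc, hu]
        rw [sub_dotProduct, sub_dotProduct, dotProduct_sub, dotProduct_sub]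
        rw [h, dotProduct_comm w v]
        ring
      rw [huv]
      have h1 : 2 / c * (c / 2) = 1 := by field_simp
      rw [h1, one_smul, hu, sub_sub_cancel]

lemma maha_eq {Sig : Matrix (Fin d) (Fin d) ℝ} (hSig : Sig.PosDef) (a b : Fin d → ℝ) :
    mahalanobis Sig a b = en ((posSemidefSqrt hSig.posSemidef)⁻¹ *ᵥ (a - b)) := by
  set S := posSemidefSqrt hSig.posSemidef with hSdef
  have hS : S * S = Sig := psqrt_mul_self hSig.posSemidef
  have hSt : Sᵀ = S := by
    exact psqrt_transpose hSig.posSemidef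
  unfold mahalanobis en
  congr 1
  rw [← hS, Matrix.mul_inv_rev, ← mulVec_mulVec, dotProduct_mulVec, ← mulVec_transpose,
    transpose_nonsing_inv, hSt]

lemma en_orth {O : Matrix (Fin d) (Fin d) ℝ} (hO : O * Oᵀ = 1) (z : Fin d → ℝ) :
    en (O *ᵥ z) = en z := by
  have hOtO : Oᵀ * O = 1 := mul_eq_one_comm.mp hO
  unfold en
  congr 1
  rw [dotProduct_mulVec, ← mulVec_transpose, mulVec_mulVec, hOtO, one_mulVec]

lemma maha_nonneg (Sig : Matrix (Fin d) (Fin d) ℝ) (a b : Fin d → ℝ) :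
    0 ≤ mahalanobis Sig a b := Real.sqrt_nonneg _

/-- Main invariance: equal Mahalanobis radius implies equal centrality. -/
lemma centrality_invariant
    (Sig : Matrix (Fin d) (Fin d) ℝ) (hSig : Sig.PosDef)
    (F : Measure (Fin d → ℝ)) [IsProbabilityMeasure F] (μ : Fin d → ℝ)
    (hell : ∀ O : Matrix (Fin d) (Fin d) ℝ, O * Oᵀ = 1 →
      F.map (fun x => (posSemidefSqrt hSig.posSemidef)⁻¹ *ᵥ (x - μ))
        = F.map (fun x => O *ᵥ ((posSemidefSqrt hSig.posSemidef)⁻¹ *ᵥ (x - μ)))) :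
    ∀ x y : Fin d → ℝ, mahalanobis Sig x μ = mahalanobis Sig y μ →
      prefCentrality F (mahalanobis Sig) x = prefCentrality F (mahalanobis Sig) y := by
  set S := posSemidefSqrt hSig.posSemidef with hSdef
  set T : (Fin d → ℝ) → (Fin d → ℝ) := fun x => S⁻¹ *ᵥ (x - μ) with hT
  have hTmeas : Measurable T :=
    ((continuous_mulVec S⁻¹).comp (continuous_id.sub continuous_const)).measurable
  set G : Measure (Fin d → ℝ) := F.map T with hG
  haveI : IsProbabilityMeasure G := Measure.isProbabilityMeasure_map hTmeas.aemeasurable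
  set B : (Fin d → ℝ) → Set ((Fin d → ℝ) × (Fin d → ℝ)) :=
    fun w => {p | en (p.2 - w) < en (p.2 - p.1)} with hB
  have hBmeas : ∀ w, MeasurableSet (B w) := by
    intro w
    exact (isOpen_lt (continuous_en.comp (continuous_snd.sub continuous_const))
      (continuous_en.comp (continuous_snd.sub continuous_fst))).measurableSet
  have hTdiff : ∀ a b : Fin d → ℝ, T a - T b = S⁻¹ *ᵥ (a - b) := by
    intro a b
    rw [hT]
    simp only
    rw [← mulVec_sub, sub_sub_sub_cancel_right]
  have hAB : ∀ y : Fin d → ℝ,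
      {p : (Fin d → ℝ) × (Fin d → ℝ) | mahalanobis Sig p.2 y < mahalanobis Sig p.2 p.1}
        = Prod.map T T ⁻¹' B (T y) := by
    intro y
    ext p
    simp only [Set.mem_setOf_eq, Set.mem_preimage, Prod.map, hB]
    rw [maha_eq hSig, maha_eq hSig, ← hSdef, ← hTdiff, ← hTdiff]
  have hPmeas : Measurable (Prod.map T T) := hTmeas.prodMap hTmeas
  have r_eq : ∀ y : Fin d → ℝ,
      prefCentrality F (mahalanobis Sig) y = ((G.prod G) (B (T y))).toReal := by
    intro y
    have hA : MeasurableSet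
        {p : (Fin d → ℝ) × (Fin d → ℝ) | mahalanobis Sig p.2 y < mahalanobis Sig p.2 p.1} := by
      rw [hAB y]; exact hPmeas (hBmeas _)
    have h2 : prefCentrality F (mahalanobis Sig) y
        = (∫⁻ x, F (Prod.mk x ⁻¹'
            {p : (Fin d → ℝ) × (Fin d → ℝ) | mahalanobis Sig p.2 y < mahalanobis Sig p.2 p.1})
            ∂F).toReal :=
      integral_toReal (measurable_measure_prodMk_left hA).aemeasurable
        (Filter.Eventually.of_forall fun x => measure_lt_top F _)
    rw [h2, ← Measure.prod_apply hA, hAB y,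
      ← Measure.map_apply hPmeas (hBmeas _), ← Measure.map_prod_map _ _ hTmeas hTmeas]
  intro x y hxy
  have hdot : (T x) ⬝ᵥ (T x) = (T y) ⬝ᵥ (T y) := by
    have hx : mahalanobis Sig x μ = en (T x) := maha_eq hSig x μ
    have hy : mahalanobis Sig y μ = en (T y) := maha_eq hSig y μ
    rw [hx, hy] at hxy
    exact (Real.sqrt_inj (dot_self_nonneg _) (dot_self_nonneg _)).mp hxy
  obtain ⟨O, hO, hOv⟩ := householder (T x) (T y) hdot
  set fO : (Fin d → ℝ) → (Fin d → ℝ) := fun v => O *ᵥ v with hfO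
  have hfOmeas : Measurable fO := (continuous_mulVec O).measurable
  have hGO : G = G.map fO := by
    rw [hG, Measure.map_map hfOmeas hTmeas]
    exact hell O hO
  have hpre : Prod.map fO fO ⁻¹' B (fO (T x)) = B (T x) := by
    ext p
    simp only [Set.mem_preimage, Prod.map, hB, Set.mem_setOf_eq, hfO]
    rw [← mulVec_sub, ← mulVec_sub, en_orth hO, en_orth hO]
  have key : (G.prod G) (B (T y)) = (G.prod G) (B (T x)) := by
    conv_lhs => rw [← hOv, hGO]
    rw [Measure.map_prod_map _ _ hfOmeas hfOmeas,
      Measure.map_apply (hfOmeas.prodMap hfOmeas) (hBmeas _)]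
    exact congrArg _ hpre
  rw [r_eq x, r_eq y, key]

end EllipticalAux


open EllipticalAux

open Matrix in
/-- Proposition 2: elliptical center-outward ordering: if `F` on
`ℝ^d` is elliptically symmetric about `μ` with scatter `Σ` (i.e. `Σ^{-1/2}(X-μ)`
is distributionally invariant under every orthogonal `O`), then the preference
centrality `r_F` computed with `δ_Σ` is constant on Mahalanobis spheres around
`μ`; if moreover the interpolation property holds, `r_F` is monotone in the
Mahalanobis radius, and any calibrated `θ*` with `H(θ*(y)) = r_F(y)` (`H`
strictly increasing) is a non-increasing function of `δ_Σ(·, μ)`. -/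
theorem elliptical_center_outward_ordering {d : ℕ}
    (Sig : Matrix (Fin d) (Fin d) ℝ) (hSig : Sig.PosDef)
    (F : Measure (Fin d → ℝ)) [IsProbabilityMeasure F] (μ : Fin d → ℝ)
    (hell : ∀ O : Matrix (Fin d) (Fin d) ℝ, O * Oᵀ = 1 →
      F.map (fun x => (posSemidefSqrt hSig.posSemidef)⁻¹ *ᵥ (x - μ))
        = F.map (fun x => O *ᵥ ((posSemidefSqrt hSig.posSemidef)⁻¹ *ᵥ (x - μ)))) :
    (∀ x y : Fin d → ℝ, mahalanobis Sig x μ = mahalanobis Sig y μ →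
      prefCentrality F (mahalanobis Sig) x = prefCentrality F (mahalanobis Sig) y) ∧
    ((∀ x : Fin d → ℝ, ∀ α ∈ Set.Icc (0 : ℝ) 1,
        prefCentrality F (mahalanobis Sig) x
          ≤ prefCentrality F (mahalanobis Sig) ((1 - α) • μ + α • x)) →
      (∀ x y : Fin d → ℝ, mahalanobis Sig x μ ≤ mahalanobis Sig y μ →
        prefCentrality F (mahalanobis Sig) y ≤ prefCentrality F (mahalanobis Sig) x) ∧
      (∀ (H : ℝ → ℝ) (θs : (Fin d → ℝ) → ℝ), StrictMono H →
        (∀ y : Fin d → ℝ, H (θs y) = prefCentrality F (mahalanobis Sig) y) →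
        ∃ φ : ℝ → ℝ, AntitoneOn φ (Set.Ici 0) ∧
          ∀ x : Fin d → ℝ, θs x = φ (mahalanobis Sig x μ))) := by
  have inv := centrality_invariant Sig hSig F μ hell
  refine ⟨inv, fun hinterp => ?_⟩
  have hscale : ∀ (y : Fin d → ℝ) (α : ℝ), 0 ≤ α →
      mahalanobis Sig ((1 - α) • μ + α • y) μ = α * mahalanobis Sig y μ := by
    intro y α hα
    have hdiff : ((1 - α) • μ + α • y) - μ = α • (y - μ) := by
      funext i
      simp only [Pi.sub_apply, Pi.add_apply, Pi.smul_apply, smul_eq_mul]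
      ring
    unfold mahalanobis
    rw [hdiff, mulVec_smul, dotProduct_smul, smul_dotProduct, smul_eq_mul, smul_eq_mul,
      ← mul_assoc, ← sq, Real.sqrt_mul (sq_nonneg α), Real.sqrt_sq hα]
  have mono : ∀ x y : Fin d → ℝ, mahalanobis Sig x μ ≤ mahalanobis Sig y μ →
      prefCentrality F (mahalanobis Sig) y ≤ prefCentrality F (mahalanobis Sig) x := by
    intro x y hxy
    by_cases hy : mahalanobis Sig y μ = 0
    · exact (inv x y (le_antisymm (hy ▸ hxy) (hy ▸ maha_nonneg Sig x μ))).ge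
    · have hy' : 0 < mahalanobis Sig y μ := lt_of_le_of_ne (maha_nonneg Sig y μ) (Ne.symm hy)
      set α : ℝ := mahalanobis Sig x μ / mahalanobis Sig y μ with hα
      have hα0 : 0 ≤ α := div_nonneg (maha_nonneg Sig x μ) hy'.le
      have hα1 : α ≤ 1 := (div_le_one hy').mpr hxy
      have hz : mahalanobis Sig ((1 - α) • μ + α • y) μ = mahalanobis Sig x μ := by
        rw [hscale y α hα0, hα, div_mul_cancel₀ _ hy]
      have h1 := inv x ((1 - α) • μ + α • y) hz.symm
      have h2 := hinterp y α ⟨hα0, hα1⟩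
      linarith
  refine ⟨mono, ?_⟩
  intro H θs hH hcal
  have hinj : Function.Injective H := hH.injective
  rcases Nat.eq_zero_or_pos d with hd | hd
  · refine ⟨fun _ => θs μ, fun a _ b _ _ => le_rfl, fun x => ?_⟩
    have hxμ : x = μ := by
      subst hd
      funext i
      exact i.elim0
    rw [hxμ]
  · set S := posSemidefSqrt hSig.posSemidef with hSdef
    have hS : S * S = Sig := psqrt_mul_self hSig.posSemidef
    have hdet : IsUnit S.det := by
      refine isUnit_iff_ne_zero.mpr fun h0 => hSig.det_pos.ne' ?_
      rw [← hS, det_mul, h0, mul_zero]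
    set e : Fin d → ℝ := Pi.single ⟨0, hd⟩ 1 with he
    have hee : e ⬝ᵥ e = 1 := by
      simp [he, dotProduct, Pi.single_apply]
    set base : ℝ → (Fin d → ℝ) := fun t => μ + t • (S *ᵥ e) with hbase
    have hbm : ∀ t : ℝ, 0 ≤ t → mahalanobis Sig (base t) μ = t := by
      intro t ht
      rw [maha_eq hSig, ← hSdef]
      have h1 : base t - μ = t • (S *ᵥ e) := by rw [hbase]; simp
      rw [h1, mulVec_smul, mulVec_mulVec, Matrix.nonsing_inv_mul S hdet, one_mulVec]
      unfold en
      rw [smul_dotProduct, dotProduct_smul, hee, smul_eq_mul, smul_eq_mul, mul_one,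
        Real.sqrt_mul_self ht]
    refine ⟨fun t => θs (base t), ?_, ?_⟩
    · intro a ha b hb hab
      have h1 := mono (base a) (base b)
        (by rw [hbm a ha, hbm b hb]; exact hab)
      have h2 : H (θs (base b)) ≤ H (θs (base a)) := by rw [hcal, hcal]; exact h1
      exact hH.le_iff_le.mp h2
    · intro x
      have h0 : mahalanobis Sig (base (mahalanobis Sig x μ)) μ = mahalanobis Sig x μ :=
        hbm _ (maha_nonneg Sig x μ)
      have h1 := inv x (base (mahalanobis Sig x μ)) h0.symm
      exact hinj (by rw [hcal, hcal, h1])
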